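/- In StraTT, the restriction lemma holds: if Δ ⊢ Γ then Δ ⊢ ⌈Γ⌉^k for any level k, and if Δ; Γ ⊢ a :^k A then Δ; ⌈Γ⌉^k ⊢ a :^k A, where ⌈Γ⌉^k is the context obtained by removing all assumptions of Γ whose level is strictly greater than k. -/

import Mathlib

/-! Syntax of StraTT: a single universe ⋆, variables, displaced constants,
stratified dependent function types `Πx:^j A. B`, floating nondependent
function types `A → B`, abstractions, applications, the empty type and its
eliminator. Levels are natural numbers. -/

inductive Tm : Type
  | star
  | var (x : ℕ)
  | const (x : ℕ) (i : ℕ)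
  | pi (j : ℕ) (x : ℕ) (A B : Tm)
  | arrow (A B : Tm)
  | lam (x : ℕ) (b : Tm)
  | app (b a : Tm)
  | bot
  | absurd (b : Tm)
  deriving DecidableEq

namespace Tm

/-- Substitution `a{u/x}` of the term `u` for the variable `x`. -/
def subst (x : ℕ) (u : Tm) : Tm → Tm
  | star => star
  | var y => if y = x then u else var y
  | const y i => const y i
  | pi j y A B => pi j y (subst x u A) (if y = x then B else subst x u B)
  | arrow A B => arrow (subst x u A) (subst x u B)
  | lam y b => lam y (if y = x then b else subst x u b)
  | app b a => app (subst x u b) (subst x u a)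
  | bot => bot
  | absurd b => absurd (subst x u b)

/-- Displacement `a^{+i}`: uniformly increment every level annotation by `i`. -/
def incr (i : ℕ) : Tm → Tm
  | star => star
  | var y => var y
  | const y j => const y (i + j)
  | pi j y A B => pi (i + j) y (incr i A) (incr i B)
  | arrow A B => arrow (incr i A) (incr i B)
  | lam y b => lam y (incr i b)
  | app b a => app (incr i b) (incr i a)
  | bot => bot
  | absurd b => absurd (incr i b)

end Tm

/-- A signature entry `x :^k A := a` (name, level, type, definition). -/
abbrev Sig := List (ℕ × ℕ × Tm × Tm)
/-- A context entry `x :^k A` (name, level, type); head is the most recent. -/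
abbrev Ctx := List (ℕ × ℕ × Tm)

def lookupSig : Sig → ℕ → Option (ℕ × Tm × Tm)
  | [], _ => none
  | (y, k, A, a) :: Δ, x => if x = y then some (k, A, a) else lookupSig Δ x

def lookupCtx : Ctx → ℕ → Option (ℕ × Tm)
  | [], _ => none
  | (y, k, A) :: Γ, x => if x = y then some (k, A) else lookupCtx Γ x

/-- Untyped definitional equality `Δ ⊢ a ≡ b`. -/
inductive DEq (Δ : Sig) : Tm → Tm → Prop
  | refl (a) : DEq Δ a a
  | sym : DEq Δ a b → DEq Δ b a
  | trans : DEq Δ a b → DEq Δ b c → DEq Δ a c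
  | beta (x b a) : DEq Δ (.app (.lam x b) a) (Tm.subst x a b)
  | delta {x i k A a} : lookupSig Δ x = some (k, A, a) → DEq Δ (.const x i) (Tm.incr i a)
  | pi {j x A A' B B'} : DEq Δ A A' → DEq Δ B B' → DEq Δ (.pi j x A B) (.pi j x A' B')
  | arrow {A A' B B'} : DEq Δ A A' → DEq Δ B B' → DEq Δ (.arrow A B) (.arrow A' B')
  | lam {x b b'} : DEq Δ b b' → DEq Δ (.lam x b) (.lam x b')
  | app {b b' a a'} : DEq Δ b b' → DEq Δ a a' → DEq Δ (.app b a) (.app b' a')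
  | absurd {b b'} : DEq Δ b b' → DEq Δ (.absurd b) (.absurd b')

mutual
  /-- Well-formed signatures `⊢ Δ`. -/
  inductive SigWf : Sig → Prop
    | nil : SigWf []
    | cons {Δ x k A a} : SigWf Δ → lookupSig Δ x = none →
        Typing Δ [] a k A → SigWf ((x, k, A, a) :: Δ)

  /-- Well-formed contexts `Δ ⊢ Γ`. -/
  inductive CtxWf : Sig → Ctx → Prop
    | nil {Δ} : SigWf Δ → CtxWf Δ []
    | cons {Δ Γ x k A} : CtxWf Δ Γ → lookupCtx Γ x = none →
        Typing Δ Γ A k .star → CtxWf Δ ((x, k, A) :: Γ)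

  /-- Level-annotated typing `Δ; Γ ⊢ a :^k A` of full StraTT. -/
  inductive Typing : Sig → Ctx → Tm → ℕ → Tm → Prop
    | star {Δ Γ k} : CtxWf Δ Γ → Typing Δ Γ .star k .star
    | var {Δ Γ x j k A} : CtxWf Δ Γ → lookupCtx Γ x = some (j, A) → j ≤ k →
        Typing Δ Γ (.var x) k A
    | const {Δ Γ x i j k A a} : CtxWf Δ Γ → lookupSig Δ x = some (j, A, a) →
        i + j ≤ k → Typing Δ Γ (.const x i) k (Tm.incr i A)
    | pi {Δ Γ j k x A B} : j < k → Typing Δ Γ A j .star →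
        Typing Δ ((x, j, A) :: Γ) B k .star → Typing Δ Γ (.pi j x A B) k .star
    | lamPi {Δ Γ j k x A B b} : j < k → Typing Δ Γ A j .star →
        Typing Δ ((x, j, A) :: Γ) b k B → Typing Δ Γ (.lam x b) k (.pi j x A B)
    | appPi {Δ Γ j k x A B b a} : Typing Δ Γ b k (.pi j x A B) → Typing Δ Γ a j A →
        Typing Δ Γ (.app b a) k (Tm.subst x a B)
    | arrow {Δ Γ k A B} : Typing Δ Γ A k .star → Typing Δ Γ B k .star →
        Typing Δ Γ (.arrow A B) k .star
    | lamArrow {Δ Γ k x A B b} : Typing Δ Γ A k .star → Typing Δ Γ B k .star →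
        Typing Δ ((x, k, A) :: Γ) b k B → Typing Δ Γ (.lam x b) k (.arrow A B)
    | appArrow {Δ Γ k A B b a} : Typing Δ Γ b k (.arrow A B) → Typing Δ Γ a k A →
        Typing Δ Γ (.app b a) k B
    | bot {Δ Γ k} : CtxWf Δ Γ → Typing Δ Γ .bot k .star
    | absurd {Δ Γ k b A} : Typing Δ Γ b k .bot → Typing Δ Γ A k .star →
        Typing Δ Γ (.absurd b) k A
    | conv {Δ Γ k a A B} : Typing Δ Γ a k A → DEq Δ A B →
        Typing Δ Γ B k .star → Typing Δ Γ a k B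
end

/-- Restriction `⌈Γ⌉^k`: remove all assumptions whose level is strictly
greater than `k`. -/
def restrict (k : ℕ) (Γ : Ctx) : Ctx :=
  Γ.filter (fun e => e.2.1 ≤ k)

/-! ### Auxiliary development for the restriction lemma -/

lemma lookup_restrict_none {k : ℕ} {Γ : Ctx} {x : ℕ}
    (h : lookupCtx Γ x = none) : lookupCtx (restrict k Γ) x = none := by
  induction Γ with
  | nil => simp [restrict, lookupCtx]
  | cons e Γ ih =>
    obtain ⟨y, j, A⟩ := e
    simp only [lookupCtx] at h
    split at h
    · exact absurd h (by simp)
    · simp only [restrict, List.filter_cons]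
      split
      · simpa only [lookupCtx, if_neg ‹¬ x = y›, restrict] using ih h
      · exact ih h

lemma lookup_restrict_some {k : ℕ} {Γ : Ctx} {x j : ℕ} {A : Tm}
    (h : lookupCtx Γ x = some (j, A)) (hj : j ≤ k) :
    lookupCtx (restrict k Γ) x = some (j, A) := by
  induction Γ with
  | nil => simp [lookupCtx] at h
  | cons e Γ ih =>
    obtain ⟨y, j', A'⟩ := e
    simp only [lookupCtx] at h
    by_cases hxy : x = y
    · rw [if_pos hxy] at h
      obtain ⟨rfl, rfl⟩ : j' = j ∧ A' = A := by
        simpa [Prod.ext_iff] using h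
      simp [restrict, List.filter_cons, hj, lookupCtx, hxy]
    · rw [if_neg hxy] at h
      simp only [restrict, List.filter_cons]
      split
      · simpa only [lookupCtx, if_neg hxy, restrict] using ih h
      · exact ih h

/-- Lookup-based compatibility of contexts at level `k`. -/
def LkR (k : ℕ) (Γ Γ' : Ctx) : Prop :=
  (∀ x, lookupCtx Γ x = none → lookupCtx Γ' x = none) ∧
  (∀ x j A, lookupCtx Γ x = some (j, A) → j ≤ k → lookupCtx Γ' x = some (j, A))

lemma lkR_restrict (k : ℕ) (Γ : Ctx) : LkR k Γ (restrict k Γ) :=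
  ⟨fun _ h => lookup_restrict_none h, fun _ _ _ h hj => lookup_restrict_some h hj⟩

lemma lkR_mono {k k' : ℕ} {Γ Γ' : Ctx} (h : LkR k Γ Γ') (hk : k' ≤ k) :
    LkR k' Γ Γ' :=
  ⟨h.1, fun x j A hl hj => h.2 x j A hl (hj.trans hk)⟩

lemma lkR_cons {k : ℕ} {Γ Γ' : Ctx} (h : LkR k Γ Γ') (x j : ℕ) (A : Tm) :
    LkR k ((x, j, A) :: Γ) ((x, j, A) :: Γ') := by
  constructor
  · intro y hy
    simp only [lookupCtx] at hy ⊢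
    split at hy
    · exact absurd hy (by simp)
    · rw [if_neg ‹¬ y = x›]
      exact h.1 y hy
  · intro y j' A' hy hj'
    simp only [lookupCtx] at hy ⊢
    split at hy
    · rename_i hyx
      rw [if_pos hyx]
      exact hy
    · rw [if_neg ‹¬ y = x›]
      exact h.2 y j' A' hy hj'

/-- Bound on the level annotations of `pi` types occurring in a term. -/
def TmB (k : ℕ) : Tm → Prop
  | .star => True
  | .var _ => True
  | .const _ _ => True
  | .pi j _ A B => j < k ∧ TmB k A ∧ TmB k B
  | .arrow A B => TmB k A ∧ TmB k B
  | .lam _ b => TmB k b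
  | .app b a => TmB k b ∧ TmB k a
  | .bot => True
  | .absurd b => TmB k b

lemma TmB.mono {k k' : ℕ} (hk : k ≤ k') : ∀ {a : Tm}, TmB k a → TmB k' a := by
  intro a
  induction a with
  | pi j y A B ihA ihB => exact fun h => ⟨h.1.trans_le hk, ihA h.2.1, ihB h.2.2⟩
  | arrow A B ihA ihB => exact fun h => ⟨ihA h.1, ihB h.2⟩
  | lam y b ih => exact ih
  | app b a ihb iha => exact fun h => ⟨ihb h.1, iha h.2⟩
  | absurd b ih => exact ih
  | _ => exact fun h => h

lemma TmB.incr {k i : ℕ} : ∀ {a : Tm}, TmB k a → TmB (i + k) (Tm.incr i a) := by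
  intro a
  induction a with
  | pi j y A B ihA ihB =>
    exact fun h => ⟨Nat.add_lt_add_left h.1 i, ihA h.2.1, ihB h.2.2⟩
  | arrow A B ihA ihB => exact fun h => ⟨ihA h.1, ihB h.2⟩
  | lam y b ih => exact ih
  | app b a ihb iha => exact fun h => ⟨ihb h.1, iha h.2⟩
  | absurd b ih => exact ih
  | _ => exact fun h => h

lemma TmB.subst {k x : ℕ} {u : Tm} (hu : TmB k u) :
    ∀ {b : Tm}, TmB k b → TmB k (Tm.subst x u b) := by
  intro b
  induction b with
  | var y =>
    intro _
    simp only [Tm.subst]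
    split
    · exact hu
    · trivial
  | pi j y A B ihA ihB =>
    intro h
    refine ⟨h.1, ihA h.2.1, ?_⟩
    split
    · exact h.2.2
    · exact ihB h.2.2
  | arrow A B ihA ihB => exact fun h => ⟨ihA h.1, ihB h.2⟩
  | lam y b ih =>
    intro h
    show TmB k (if y = x then b else Tm.subst x u b)
    split
    · exact h
    · exact ih h
  | app b a ihb iha => exact fun h => ⟨ihb h.1, iha h.2⟩
  | absurd b ih => exact ih
  | _ => exact fun h => h

def SigB (Δ : Sig) : Prop :=
  ∀ x j A a, lookupSig Δ x = some (j, A, a) → TmB j A ∧ TmB j a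

def CtxB (Γ : Ctx) : Prop :=
  ∀ x j A, lookupCtx Γ x = some (j, A) → TmB j A

/-- Every typing judgement has level-bounded subject and type. -/
lemma typing_tmB {Δ : Sig} {Γ : Ctx} {a : Tm} {k : ℕ} {A : Tm}
    (h : Typing Δ Γ a k A) : TmB k a ∧ TmB k A := by
  induction h using Typing.rec (motive_1 := fun Δ _ => SigB Δ)
    (motive_2 := fun Δ Γ _ => SigB Δ ∧ CtxB Γ)
  case nil =>
    intro x j A a hl
    simp [lookupSig] at hl
  case cons hΔ hl ht ihΔ iht =>
    intro y j' A' a' hl'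
    simp only [lookupSig] at hl'
    split at hl'
    · obtain ⟨rfl, rfl, rfl⟩ : _ ∧ _ ∧ _ := by simpa [Prod.ext_iff] using hl'
      exact ⟨iht.2, iht.1⟩
    · exact ihΔ y j' A' a' hl'
  case nil =>
    intro Δ' hΔ ihΔ
    exact ⟨ihΔ, fun x j A hl => by simp [lookupCtx] at hl⟩
  case cons hΓ hl ht ihΓ iht =>
    refine ⟨ihΓ.1, fun y j' A' hl' => ?_⟩
    simp only [lookupCtx] at hl'
    split at hl'
    · obtain ⟨rfl, rfl⟩ : _ ∧ _ := by simpa [Prod.ext_iff] using hl'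
      exact iht.1
    · exact ihΓ.2 y j' A' hl'
  case star => exact ⟨trivial, trivial⟩
  case var hΓ hl hj ihΓ => exact ⟨trivial, (ihΓ.2 _ _ _ hl).mono hj⟩
  case const hΓ hl hij ihΓ =>
    exact ⟨trivial, ((ihΓ.1 _ _ _ _ hl).1.incr).mono hij⟩
  case pi hjk hA hB ihA ihB =>
    exact ⟨⟨hjk, ihA.1.mono hjk.le, ihB.1⟩, trivial⟩
  case lamPi hjk hA hb ihA ihb =>
    exact ⟨ihb.1, ⟨hjk, ihA.1.mono hjk.le, ihb.2⟩⟩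
  case appPi hb ha ihb iha =>
    exact ⟨⟨ihb.1, iha.1.mono ihb.2.1.le⟩,
      TmB.subst (iha.1.mono ihb.2.1.le) ihb.2.2.2⟩
  case arrow hA hB ihA ihB => exact ⟨⟨ihA.1, ihB.1⟩, trivial⟩
  case lamArrow hA hB hb ihA ihB ihb => exact ⟨ihb.1, ihA.1, ihB.1⟩
  case appArrow hb ha ihb iha => exact ⟨⟨ihb.1, iha.1⟩, ihb.2.2⟩
  case bot => exact ⟨trivial, trivial⟩
  case absurd hb hA ihb ihA => exact ⟨ihb.1, ihA.1⟩
  case conv ha hEq hB iha ihB => exact ⟨iha.1, ihB.1⟩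

lemma typing_pi_lt {Δ : Sig} {Γ : Ctx} {b : Tm} {j k x : ℕ} {A B : Tm}
    (h : Typing Δ Γ b k (.pi j x A B)) : j < k :=
  (typing_tmB h).2.1

/-- Every typing derivation has a well-formed context. -/
lemma ctxWf_of_typing {Δ : Sig} {Γ : Ctx} {a : Tm} {k : ℕ} {A : Tm}
    (h : Typing Δ Γ a k A) : CtxWf Δ Γ := by
  induction h using Typing.rec (motive_1 := fun _ _ => True)
    (motive_2 := fun _ _ _ => True) <;> (intros; first | trivial | assumption)

lemma lookup_of_ctxWf_cons {Δ : Sig} {Γ : Ctx} {x k : ℕ} {A : Tm}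
    (h : CtxWf Δ ((x, k, A) :: Γ)) : lookupCtx Γ x = none := by
  cases h; assumption

/-- Typing is preserved under lookup-compatible context replacement. -/
lemma typing_lkR {Δ : Sig} {Γ : Ctx} {a : Tm} {k : ℕ} {A : Tm}
    (h : Typing Δ Γ a k A) :
    ∀ Γ', CtxWf Δ Γ' → LkR k Γ Γ' → Typing Δ Γ' a k A := by
  induction h using Typing.rec (motive_1 := fun _ _ => True)
    (motive_2 := fun _ _ _ => True)
  case star => intro Γ' hΓ' _; exact Typing.star hΓ'
  case var hΓ hl hj _ =>
    intro Γ' hΓ' hR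
    exact Typing.var hΓ' (hR.2 _ _ _ hl hj) hj
  case const hΓ hl hij _ =>
    intro Γ' hΓ' _
    exact Typing.const hΓ' hl hij
  case pi hjk hA hB ihA ihB =>
    intro Γ' hΓ' hR
    have hxn := lookup_of_ctxWf_cons (ctxWf_of_typing hB)
    have hA' := ihA Γ' hΓ' (lkR_mono hR hjk.le)
    have hwf' := CtxWf.cons hΓ' (hR.1 _ hxn) hA'
    exact Typing.pi hjk hA' (ihB _ hwf' (lkR_cons hR _ _ _))
  case lamPi hjk hA hb ihA ihb =>
    intro Γ' hΓ' hR
    have hxn := lookup_of_ctxWf_cons (ctxWf_of_typing hb)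
    have hA' := ihA Γ' hΓ' (lkR_mono hR hjk.le)
    have hwf' := CtxWf.cons hΓ' (hR.1 _ hxn) hA'
    exact Typing.lamPi hjk hA' (ihb _ hwf' (lkR_cons hR _ _ _))
  case appPi hb ha ihb iha =>
    intro Γ' hΓ' hR
    exact Typing.appPi (ihb Γ' hΓ' hR)
      (iha Γ' hΓ' (lkR_mono hR (typing_pi_lt hb).le))
  case arrow hA hB ihA ihB =>
    intro Γ' hΓ' hR
    exact Typing.arrow (ihA Γ' hΓ' hR) (ihB Γ' hΓ' hR)
  case lamArrow hA hB hb ihA ihB ihb =>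
    intro Γ' hΓ' hR
    have hxn := lookup_of_ctxWf_cons (ctxWf_of_typing hb)
    have hA' := ihA Γ' hΓ' hR
    have hwf' := CtxWf.cons hΓ' (hR.1 _ hxn) hA'
    exact Typing.lamArrow hA' (ihB Γ' hΓ' hR) (ihb _ hwf' (lkR_cons hR _ _ _))
  case appArrow hb ha ihb iha =>
    intro Γ' hΓ' hR
    exact Typing.appArrow (ihb Γ' hΓ' hR) (iha Γ' hΓ' hR)
  case bot => intro Γ' hΓ' _; exact Typing.bot hΓ'
  case absurd hb hA ihb ihA =>
    intro Γ' hΓ' hR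
    exact Typing.absurd (ihb Γ' hΓ' hR) (ihA Γ' hΓ' hR)
  case conv ha hEq hB iha ihB =>
    intro Γ' hΓ' hR
    exact Typing.conv (iha Γ' hΓ' hR) hEq (ihB Γ' hΓ' hR)
  all_goals (intros; trivial)

/-- Restriction of a well-formed context is well-formed. -/
lemma ctxWf_restrict {Δ : Sig} {Γ : Ctx} (h : CtxWf Δ Γ) :
    ∀ k, CtxWf Δ (restrict k Γ) := by
  induction h using CtxWf.rec (motive_1 := fun _ _ => True)
    (motive_3 := fun _ _ _ _ _ _ => True)
  all_goals intros
  all_goals try trivial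
  case nil => exact CtxWf.nil ‹SigWf _›
  case cons =>
    rename_i Δ' Γ' x j A hΓ hl hA ihΓ _ k
    by_cases hj : j ≤ k
    · rw [show restrict k ((x, j, A) :: Γ') = (x, j, A) :: restrict k Γ' by
        simp [restrict, List.filter_cons, hj]]
      exact CtxWf.cons (ihΓ k) (lookup_restrict_none hl)
        (typing_lkR hA _ (ihΓ k) (lkR_mono (lkR_restrict k Γ') hj))
    · rw [show restrict k ((x, j, A) :: Γ') = restrict k Γ' by
        simp [restrict, List.filter_cons, hj]]
      exact ihΓ k

/-- **Restriction (StraTT)**: if `Δ ⊢ Γ` then `Δ ⊢ ⌈Γ⌉^k` for every `k`, and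
if `Δ; Γ ⊢ a :^k A` then `Δ; ⌈Γ⌉^k ⊢ a :^k A`. -/
theorem stratt_restriction {Δ : Sig} {Γ : Ctx} :
    (CtxWf Δ Γ → ∀ k, CtxWf Δ (restrict k Γ)) ∧
    (∀ a A k, Typing Δ Γ a k A → Typing Δ (restrict k Γ) a k A) :=
  ⟨fun h k => ctxWf_restrict h k,
   fun _ _ k h => typing_lkR h _ (ctxWf_restrict (ctxWf_of_typing h) k)
     (lkR_restrict k _)⟩
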